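/- Let y₁,…,y_T ∈ ℝⁿ and δ₁,…,δ_T ∈ ℝᵐ be all nonzero, and suppose the per-token magnitudes are equal: ‖δ_t‖·‖y_t‖ = w₀ > 0 for all t. Define κ = E_{s≠t}[cos(y_t,y_s)·cos(δ_t,δ_s)], the uniform average over ordered pairs (s,t) with s ≠ t. Then the alignment amplification satisfies 𝒜 − 1 = (T−1)·κ. -/

import Mathlib

open Matrix

/-- The Euclidean inner product on `ℝ^n`. -/
def edot {n : ℕ} (u v : Fin n → ℝ) : ℝ := ∑ i, u i * v i

/-- The Euclidean norm of a vector in `ℝ^n`. -/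
noncomputable def enormR {n : ℕ} (v : Fin n → ℝ) : ℝ :=
  Real.sqrt (∑ i, v i ^ 2)

/-- The Frobenius norm of a real matrix. -/
noncomputable def frob {m n : ℕ} (M : Matrix (Fin m) (Fin n) ℝ) : ℝ :=
  Real.sqrt (∑ i, ∑ j, M i j ^ 2)

/-- The cosine of the angle between two vectors: `cos(u,v) = ⟨u,v⟩/(‖u‖‖v‖)`. -/
noncomputable def cosang {n : ℕ} (u v : Fin n → ℝ) : ℝ :=
  edot u v / (enormR u * enormR v)

lemma enorm_nonneg {n : ℕ} (v : Fin n → ℝ) : 0 ≤ enormR v := Real.sqrt_nonneg _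

lemma enorm_sq {n : ℕ} (v : Fin n → ℝ) : enormR v ^ 2 = ∑ i, v i ^ 2 := by
  rw [enormR, Real.sq_sqrt (Finset.sum_nonneg fun i _ => sq_nonneg _)]

lemma edot_self {n : ℕ} (v : Fin n → ℝ) : edot v v = enormR v ^ 2 := by
  rw [enorm_sq, edot]; simp [sq]

lemma frob_sq_sum {T n m : ℕ} (y : Fin T → Fin n → ℝ) (δ : Fin T → Fin m → ℝ) :
    frob (∑ t, Matrix.vecMulVec (δ t) (y t)) ^ 2
      = ∑ t, ∑ s, edot (δ t) (δ s) * edot (y t) (y s) := by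
  have h1 : frob (∑ t, Matrix.vecMulVec (δ t) (y t)) ^ 2
      = ∑ i, ∑ j, (∑ t, δ t i * y t j) ^ 2 := by
    rw [frob, Real.sq_sqrt]
    · simp [Matrix.vecMulVec, Matrix.sum_apply]
    · exact Finset.sum_nonneg fun i _ => Finset.sum_nonneg fun j _ => sq_nonneg _
  rw [h1]
  calc ∑ i, ∑ j, (∑ t, δ t i * y t j) ^ 2
      = ∑ i, ∑ j, ∑ t, ∑ s, (δ t i * δ s i) * (y t j * y s j) := by
        refine Finset.sum_congr rfl fun i _ => Finset.sum_congr rfl fun j _ => ?_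
        rw [sq, Finset.sum_mul_sum]
        exact Finset.sum_congr rfl fun t _ => Finset.sum_congr rfl fun s _ => by ring
    _ = ∑ i, ∑ t, ∑ j, ∑ s, (δ t i * δ s i) * (y t j * y s j) :=
        Finset.sum_congr rfl fun i _ => Finset.sum_comm
    _ = ∑ i, ∑ t, ∑ s, ∑ j, (δ t i * δ s i) * (y t j * y s j) :=
        Finset.sum_congr rfl fun i _ => Finset.sum_congr rfl fun t _ => Finset.sum_comm
    _ = ∑ t, ∑ i, ∑ s, ∑ j, (δ t i * δ s i) * (y t j * y s j) := Finset.sum_comm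
    _ = ∑ t, ∑ s, ∑ i, ∑ j, (δ t i * δ s i) * (y t j * y s j) :=
        Finset.sum_congr rfl fun t _ => Finset.sum_comm
    _ = ∑ t, ∑ s, edot (δ t) (δ s) * edot (y t) (y s) := by
        refine Finset.sum_congr rfl fun t _ => Finset.sum_congr rfl fun s _ => ?_
        rw [edot, edot, Finset.sum_mul_sum]

/-- **Equal-magnitude specialization of the alignment-amplification law.** If
all per-token magnitudes are equal (`‖δ_t‖‖y_t‖ = w₀ > 0`), then with
`κ = E_{s≠t}[cos(y_t,y_s)cos(δ_t,δ_s)]` (uniform average over the `T(T−1)`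
ordered pairs `s ≠ t`), the alignment amplification satisfies `𝒜 − 1 = (T−1)·κ`. -/
theorem alignment_amplification_equal_magnitude {T n m : ℕ} (hT : 1 ≤ T)
    (y : Fin T → Fin n → ℝ) (δ : Fin T → Fin m → ℝ)
    (hy : ∀ t, y t ≠ 0) (hδ : ∀ t, δ t ≠ 0)
    (w₀ : ℝ) (hw₀ : 0 < w₀)
    (hmag : ∀ t, enormR (δ t) * enormR (y t) = w₀)
    (κ : ℝ)
    (hκ : κ = (∑ t, ∑ s ∈ Finset.univ.erase t, cosang (y t) (y s) * cosang (δ t) (δ s))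
            / ((T : ℝ) * ((T : ℝ) - 1))) :
    frob (∑ t, Matrix.vecMulVec (δ t) (y t)) ^ 2
        / (∑ t, enormR (δ t) ^ 2 * enormR (y t) ^ 2) - 1 =
      ((T : ℝ) - 1) * κ := by
  have hw₀' : w₀ ≠ 0 := ne_of_gt hw₀
  have henpos : ∀ t, enormR (y t) ≠ 0 ∧ enormR (δ t) ≠ 0 := by
    intro t
    have := hmag t
    constructor <;> intro h <;> rw [h] at this <;> simp at this <;>
      exact hw₀' this.symm
  -- denominator
  have hden : (∑ t, enormR (δ t) ^ 2 * enormR (y t) ^ 2) = (T : ℝ) * w₀ ^ 2 := by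
    have : ∀ t : Fin T, enormR (δ t) ^ 2 * enormR (y t) ^ 2 = w₀ ^ 2 := by
      intro t; rw [← mul_pow, hmag t]
    simp [this]
  -- cos product identity
  have hcos : ∀ t s : Fin T,
      cosang (y t) (y s) * cosang (δ t) (δ s)
        = edot (y t) (y s) * edot (δ t) (δ s) / w₀ ^ 2 := by
    intro t s
    have h1 := hmag t; have h2 := hmag s
    rw [cosang, cosang, div_mul_div_comm]
    congr 1
    calc enormR (y t) * enormR (y s) * (enormR (δ t) * enormR (δ s))
        = (enormR (δ t) * enormR (y t)) * (enormR (δ s) * enormR (y s)) := by ring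
      _ = w₀ ^ 2 := by rw [h1, h2]; ring
  -- off-diagonal sum
  have hoff : (∑ t, ∑ s ∈ Finset.univ.erase t,
      edot (δ t) (δ s) * edot (y t) (y s)) = κ * ((T : ℝ) * ((T : ℝ) - 1)) * w₀ ^ 2 := by
    have hsum : (∑ t, ∑ s ∈ Finset.univ.erase t, cosang (y t) (y s) * cosang (δ t) (δ s))
        = (∑ t, ∑ s ∈ Finset.univ.erase t, edot (δ t) (δ s) * edot (y t) (y s)) / w₀ ^ 2 := by
      rw [Finset.sum_div]
      refine Finset.sum_congr rfl fun t _ => ?_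
      rw [Finset.sum_div]
      refine Finset.sum_congr rfl fun s _ => ?_
      rw [hcos t s]; ring_nf
    by_cases hT1 : T = 1
    · subst hT1
      simp [Fin.sum_univ_one, show (Finset.univ.erase (0 : Fin 1)) = ∅ by decide]
    · have hTpos : (1 : ℝ) < (T : ℝ) := by
        have : 2 ≤ T := lt_of_le_of_ne hT (Ne.symm hT1)
        exact_mod_cast lt_of_lt_of_le one_lt_two (by exact_mod_cast this)
      have hne : (T : ℝ) * ((T : ℝ) - 1) ≠ 0 := by
        apply mul_ne_zero <;> nlinarith
      rw [hκ, hsum]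
      rw [div_mul_cancel₀ _ hne, div_mul_cancel₀ _ (pow_ne_zero 2 hw₀')]
  -- total sum split
  have hsplit : (∑ t, ∑ s, edot (δ t) (δ s) * edot (y t) (y s))
      = (T : ℝ) * w₀ ^ 2 + κ * ((T : ℝ) * ((T : ℝ) - 1)) * w₀ ^ 2 := by
    have : ∀ t : Fin T, (∑ s, edot (δ t) (δ s) * edot (y t) (y s))
        = w₀ ^ 2 + ∑ s ∈ Finset.univ.erase t, edot (δ t) (δ s) * edot (y t) (y s) := by
      intro t
      rw [← Finset.add_sum_erase _ _ (Finset.mem_univ t)]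
      congr 1
      rw [edot_self, edot_self, ← mul_pow]
      rw [show enormR (δ t) * enormR (y t) = w₀ from hmag t]
    rw [Finset.sum_congr rfl fun t _ => this t, Finset.sum_add_distrib, hoff]
    simp [mul_comm]
  rw [frob_sq_sum, hden, hsplit]
  have hTne : (T : ℝ) ≠ 0 := by positivity
  field_simp
  ring
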